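/- Let H0, H* ∈ H^stub_s(d). If M(H0 Δ H*) contains exactly one minimal alternating cycle C*, then the length of C* is at least 4; in particular, C* cannot be an alternating 2-cycle consisting of two parallel edges {a,b}_{H0,t} and {a,b}_{H*,s} with t ≠ s. -/

import Mathlib

open Finset

/-!
Common setting: fix a vertex set `V` and two tail labels `τ, σ`, encoded as
`Bool` with `true = τ` and `false = σ`.  A hyperarc is a pair `(t, {a,b})`
consisting of a tail label and an unordered pair of vertices; it is degenerate
if `a = b`.  A hypergraph is a finite set of pairwise distinct non-degenerate
hyperarcs; `H^stub_s(d)` is the set of such hypergraphs realizing the degree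
sequence `d` (stub degree of each vertex and number of hyperarcs per tail).
`M(H0 Δ H*)` is the edge-labeled multigraph whose edges record the hyperarcs
of the symmetric difference together with the hypergraph (`lab`, `true = H0`)
containing them and their tail.
-/

/-- Tail labels: `true = τ`, `false = σ`. -/
abbrev Tail := Bool

/-- A hyperarc: a tail label together with an unordered pair of vertices. -/
abbrev Hyperarc (V : Type*) := Tail × Sym2 V

/-- A (stub) degree sequence: the stub degree of every vertex together with the
number of hyperarcs carrying each tail label. -/
structure DegreeSeq (V : Type*) where
  vdeg : V → ℕ
  tdeg : Tail → ℕ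

/-- `A` is a hypergraph in `H^stub_s(d)`: a set of pairwise distinct (this is
automatic for a `Finset`) non-degenerate hyperarcs realizing the degree
sequence `D`. -/
def Realizes {V : Type*} [DecidableEq V] (A : Finset (Hyperarc V)) (D : DegreeSeq V) : Prop :=
  (∀ e ∈ A, ¬ e.2.IsDiag) ∧
  (∀ v : V, (A.filter fun e => v ∈ e.2).card = D.vdeg v) ∧
  (∀ t : Tail, (A.filter fun e => e.1 = t).card = D.tdeg t)

/-- An edge `{a,b}_{X,t}` of the multigraph `M(H0 Δ H*)`: its label (`true`
means it comes from `H0`, `false` from `H*`), its tail `t` and its endpoints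
`{a,b}`. -/
structure MEdge (V : Type*) where
  lab : Bool
  tail : Tail
  ends : Sym2 V
deriving DecidableEq

/-- `M⁻¹`: the hyperarc underlying an edge of `M(H0 Δ H*)`. -/
def MEdge.arc {V : Type*} (e : MEdge V) : Hyperarc V := (e.tail, e.ends)

/-- The edge set of the edge-labeled multigraph `M(H0 Δ H*)`: every hyperarc of
`A(H0) \ A(H*)` becomes an edge labeled `H0` (i.e. `true`) and every hyperarc of
`A(H*) \ A(H0)` becomes an edge labeled `H*` (i.e. `false`). -/
def mEdges {V : Type*} [DecidableEq V] (A0 A1 : Finset (Hyperarc V)) : Finset (MEdge V) :=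
  ((A0 \ A1).image fun h => ⟨true, h.1, h.2⟩) ∪
    ((A1 \ A0).image fun h => ⟨false, h.1, h.2⟩)

/-- An alternating cycle in the edge set `E` of `M(H0 Δ H*)`: a closed trail
(cyclic sequence of pairwise distinct edges, consecutive edges sharing an
endpoint) whose edges alternate between label `H0` and label `H*`. -/
structure AltCycle {V : Type*} (E : Finset (MEdge V)) where
  /-- the length of the cycle -/
  n : ℕ
  two_le : 2 ≤ n
  /-- the cyclic sequence of edges -/
  edge : ℕ → MEdge V
  /-- the cyclic sequence of vertices visited -/
  vert : ℕ → V
  edge_periodic : ∀ i, edge (i + n) = edge i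
  vert_periodic : ∀ i, vert (i + n) = vert i
  mem : ∀ i, edge i ∈ E
  inj : ∀ i < n, ∀ j < n, edge i = edge j → i = j
  ends_eq : ∀ i, (edge i).ends = s(vert i, vert (i + 1))
  alt : ∀ i, (edge i).lab = !(edge (i + 1)).lab

/-- The set of edges used by an alternating cycle. -/
def AltCycle.edges {V : Type*} [DecidableEq V] {E : Finset (MEdge V)} (C : AltCycle E) :
    Finset (MEdge V) :=
  (Finset.range C.n).image C.edge

/-- A minimal alternating cycle: one containing no proper alternating subcycle. -/
def AltCycle.Minimal {V : Type*} [DecidableEq V] {E : Finset (MEdge V)} (C : AltCycle E) : Prop :=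
  ∀ C' : AltCycle E, C'.edges ⊆ C.edges → C'.edges = C.edges

/-- `|f_{X,t}(M(H0 Δ H*))|`: the number of edges of `M(H0 Δ H*)` labeled with
hypergraph `l` (`true = H0`) and tail `t`. -/
def labTailCount {V : Type*} [DecidableEq V] (A0 A1 : Finset (Hyperarc V))
    (l : Bool) (t : Tail) : ℕ :=
  ((mEdges A0 A1).filter fun e => e.lab = l ∧ e.tail = t).card

/-- `H` and `H'` differ by a single hypershuffle move, i.e. they are adjacent in
`G(H^stub_s(d))`: their symmetric difference consists of 4 hyperarcs,
`M(H Δ H')` is an alternating cycle, and the number of tail-τ edges labeled `H`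
equals the number of tail-τ edges labeled `H'`. -/
def HypershuffleAdj {V : Type*} [DecidableEq V] (A0 A1 : Finset (Hyperarc V)) : Prop :=
  ((A0 \ A1) ∪ (A1 \ A0)).card = 4 ∧
  (∃ C : AltCycle (mEdges A0 A1), C.edges = mEdges A0 A1) ∧
  labTailCount A0 A1 true true = labTailCount A0 A1 false true

-- ============ auxiliary development ============
namespace MinAux
variable {V : Type*} [DecidableEq V]

def sgn (x : MEdge V) : ℤ := if x.lab then 1 else -1

def bsum (F : Finset (MEdge V)) (w : V) : ℤ :=
  ∑ x ∈ F, if w ∈ x.ends then sgn x else 0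

lemma bsum_eq_cards (F : Finset (MEdge V)) (w : V) :
    bsum F w = ((F.filter fun x => x.lab = true ∧ w ∈ x.ends).card : ℤ)
      - ((F.filter fun x => x.lab = false ∧ w ∈ x.ends).card : ℤ) := by
  unfold bsum
  rw [← Finset.sum_boole, ← Finset.sum_boole, ← Finset.sum_sub_distrib]
  apply Finset.sum_congr rfl
  intro x _
  by_cases h1 : w ∈ x.ends <;> cases hx : x.lab <;> simp [sgn, h1, hx]

def sq (b : Bool) (i : ℕ) : ℤ := (if b then 1 else -1) * (-1) ^ i

lemma sq_succ (b : Bool) (i : ℕ) : sq b (i + 1) = - sq b i := by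
  simp only [sq, pow_succ]; ring

structure Trail (F : Finset (MEdge V)) where
  k : ℕ
  kpos : 0 < k
  e : ℕ → MEdge V
  v : ℕ → V
  mem : ∀ i < k, e i ∈ F
  inj : ∀ i < k, ∀ j < k, e i = e j → i = j
  ends : ∀ i < k, (e i).ends = s(v i, v (i + 1))
  alt : ∀ i, i + 1 < k → (e i).lab = !(e (i + 1)).lab

def Trail.T {F : Finset (MEdge V)} (tr : Trail F) : Finset (MEdge V) :=
  (range tr.k).image tr.e

def Trail.Closed {F : Finset (MEdge V)} (tr : Trail F) : Prop :=
  tr.v tr.k = tr.v 0 ∧ (tr.e 0).lab = !((tr.e (tr.k - 1)).lab)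

lemma Trail.T_subset {F : Finset (MEdge V)} (tr : Trail F) : tr.T ⊆ F := by
  intro x hx
  obtain ⟨i, hi, rfl⟩ := Finset.mem_image.mp hx
  exact tr.mem i (Finset.mem_range.mp hi)

lemma Trail.card_T {F : Finset (MEdge V)} (tr : Trail F) : tr.T.card = tr.k := by
  rw [Trail.T, Finset.card_image_of_injOn, Finset.card_range]
  intro i hi j hj h
  exact tr.inj i (by simpa using hi) j (by simpa using hj) h

lemma Trail.k_le {F : Finset (MEdge V)} (tr : Trail F) : tr.k ≤ F.card := by
  rw [← tr.card_T]; exact Finset.card_le_card tr.T_subset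

lemma trail_sgn {F : Finset (MEdge V)} (tr : Trail F) :
    ∀ i < tr.k, sgn (tr.e i) = sq (tr.e 0).lab i := by
  intro i
  induction i with
  | zero => intro _; cases h : (tr.e 0).lab <;> simp [sgn, sq, h]
  | succ n ih =>
    intro h
    have hn : n < tr.k := by omega
    have halt := tr.alt n h
    have : sgn (tr.e (n + 1)) = - sgn (tr.e n) := by
      cases h1 : (tr.e (n+1)).lab <;> rw [h1] at halt <;> simp [sgn, halt, h1]
    rw [this, ih hn, sq_succ]

lemma trail_bsum {F : Finset (MEdge V)} (tr : Trail F)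
    (hnd : ∀ i < tr.k, ¬ (tr.e i).ends.IsDiag) (w : V) :
    bsum tr.T w
      = (if w = tr.v 0 then sq (tr.e 0).lab 0 else 0)
        - (if w = tr.v tr.k then sq (tr.e 0).lab tr.k else 0) := by
  set b := (tr.e 0).lab with hb
  unfold bsum Trail.T
  rw [Finset.sum_image (by
    intro i hi j hj h
    exact tr.inj i (Finset.mem_range.mp hi) j (Finset.mem_range.mp hj) h)]
  rw [← Finset.sum_range_sub' (fun i => if w = tr.v i then sq b i else 0) tr.k]
  apply Finset.sum_congr rfl
  intro i hi
  have hi' : i < tr.k := Finset.mem_range.mp hi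
  have hends := tr.ends i hi'
  have hneq : tr.v i ≠ tr.v (i + 1) := by
    have := hnd i hi'
    rw [hends] at this
    simpa [Sym2.mk_isDiag_iff] using this
  have hsgn : sgn (tr.e i) = sq b i := trail_sgn tr i hi'
  rw [hends]
  have hmem : (w ∈ (s(tr.v i, tr.v (i+1)) : Sym2 V)) ↔ (w = tr.v i ∨ w = tr.v (i+1)) :=
    Sym2.mem_iff
  by_cases h1 : w = tr.v i <;> by_cases h2 : w = tr.v (i + 1)
  · exact absurd (h1.symm.trans h2) hneq
  · rw [if_pos (hmem.mpr (Or.inl h1)), if_pos h1, if_neg h2, hsgn]; ring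
  · rw [if_pos (hmem.mpr (Or.inr h2)), if_neg h1, if_pos h2, hsgn, sq_succ]; ring
  · rw [if_neg (fun hc => by rcases hmem.mp hc with h | h; exacts [h1 h, h2 h]),
      if_neg h1, if_neg h2]; ring

lemma extend_or_close {F : Finset (MEdge V)} (hbal : ∀ w, bsum F w = 0)
    (hnd : ∀ x ∈ F, ¬ x.ends.IsDiag) (tr : Trail F) :
    tr.Closed ∨
      ∃ x ∈ F, x ∉ tr.T ∧ x.lab = !((tr.e (tr.k - 1)).lab) ∧ tr.v tr.k ∈ x.ends := by
  by_contra hcon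
  push_neg at hcon
  obtain ⟨hnc, hext⟩ := hcon
  obtain ⟨m, hm⟩ : ∃ m, tr.k = m + 1 := ⟨tr.k - 1, by have := tr.kpos; omega⟩
  set b := (tr.e 0).lab with hbdef
  have hm1 : tr.k - 1 = m := by omega
  have hmlt : m < tr.k := by omega
  have hsq : sgn (tr.e m) = sq b m := trail_sgn tr m hmlt
  have h1 : bsum (F \ tr.T) (tr.v tr.k) = - bsum tr.T (tr.v tr.k) := by
    unfold bsum
    rw [Finset.sum_sdiff_eq_sub tr.T_subset]
    have hb := hbal (tr.v tr.k)
    unfold bsum at hb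
    linarith
  have h2 := trail_bsum tr (fun i hi => hnd _ (tr.mem i hi)) (tr.v tr.k)
  have hk : sq b tr.k = - sq b m := by rw [hm, sq_succ]
  have hcards := bsum_eq_cards (F \ tr.T) (tr.v tr.k)
  have hval : bsum (F \ tr.T) (tr.v tr.k)
      = sq b tr.k - (if tr.v tr.k = tr.v 0 then sq b 0 else 0) := by
    rw [h1, h2, if_pos rfl]; ring
  cases hL : (tr.e m).lab with
  | true =>
    have hzero : ((F \ tr.T).filter fun x => x.lab = false ∧ tr.v tr.k ∈ x.ends) = ∅ := by
      rw [Finset.filter_eq_empty_iff]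
      rintro x hx ⟨hxl, hxm⟩
      rw [Finset.mem_sdiff] at hx
      exact absurd hxm (hext x hx.1 hx.2 (by rw [hm1, hL]; simpa using hxl))
    rw [hzero] at hcards
    have hpos : (0:ℤ) ≤ bsum (F \ tr.T) (tr.v tr.k) := by
      rw [hcards]; simp
    rw [hval] at hpos
    have hsqm : sq b m = 1 := by rw [← hsq]; simp [sgn, hL]
    rw [hk, hsqm] at hpos
    by_cases hv : tr.v tr.k = tr.v 0
    · have hb' : b = true := by
        cases hbc : b with
        | false => exact absurd ⟨hv, by rw [hm1, hL, ← hbdef, hbc]; rfl⟩ hnc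
        | true => rfl
      have hsq0 : sq b 0 = 1 := by simp [sq, hb']
      rw [if_pos hv, hsq0] at hpos
      linarith
    · rw [if_neg hv] at hpos
      linarith
  | false =>
    have hzero : ((F \ tr.T).filter fun x => x.lab = true ∧ tr.v tr.k ∈ x.ends) = ∅ := by
      rw [Finset.filter_eq_empty_iff]
      rintro x hx ⟨hxl, hxm⟩
      rw [Finset.mem_sdiff] at hx
      exact absurd hxm (hext x hx.1 hx.2 (by rw [hm1, hL]; simpa using hxl))
    rw [hzero] at hcards
    have hneg : bsum (F \ tr.T) (tr.v tr.k) ≤ 0 := by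
      rw [hcards]; simp
    rw [hval] at hneg
    have hsqm : sq b m = -1 := by rw [← hsq]; simp [sgn, hL]
    rw [hk, hsqm] at hneg
    by_cases hv : tr.v tr.k = tr.v 0
    · have hb' : b = false := by
        cases hbc : b with
        | true => exact absurd ⟨hv, by rw [hm1, hL, ← hbdef, hbc]; rfl⟩ hnc
        | false => rfl
      have hsq0 : sq b 0 = -1 := by simp [sq, hb']
      rw [if_pos hv, hsq0] at hneg
      linarith
    · rw [if_neg hv] at hneg
      linarith

def extendTrail {F : Finset (MEdge V)} (tr : Trail F) (x : MEdge V) (w : V)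
    (hx : x ∈ F) (hni : x ∉ tr.T)
    (hlab : x.lab = !((tr.e (tr.k - 1)).lab)) (hends : x.ends = s(tr.v tr.k, w)) :
    Trail F where
  k := tr.k + 1
  kpos := by omega
  e := fun i => if i = tr.k then x else tr.e i
  v := fun i => if i = tr.k + 1 then w else tr.v i
  mem := by
    intro i hi
    by_cases h : i = tr.k
    · simpa [h] using hx
    · simpa [h] using tr.mem i (by omega)
  inj := by
    intro i hi j hj h
    by_cases h1 : i = tr.k <;> by_cases h2 : j = tr.k
    · omega
    · exfalso; apply hni
      rw [if_pos h1, if_neg h2] at h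
      exact Finset.mem_image.mpr ⟨j, Finset.mem_range.mpr (by omega), h.symm⟩
    · exfalso; apply hni
      rw [if_neg h1, if_pos h2] at h
      exact Finset.mem_image.mpr ⟨i, Finset.mem_range.mpr (by omega), h⟩
    · rw [if_neg h1, if_neg h2] at h
      exact tr.inj i (by omega) j (by omega) h
  ends := by
    intro i hi
    by_cases h : i = tr.k
    · subst h
      rw [if_pos rfl, if_neg (by omega), if_pos rfl]
      exact hends
    · rw [if_neg h, if_neg (by omega), if_neg (by omega)]
      exact tr.ends i (by omega)
  alt := by
    intro i hi
    by_cases h : i + 1 = tr.k + 1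
    · have hik : i = tr.k := by omega
      exfalso; omega
    · by_cases h2 : i + 1 = tr.k
      · have hik : i = tr.k - 1 := by omega
        rw [if_neg (by omega), if_pos h2, hik]
        rw [hlab, Bool.not_not]
      · rw [if_neg (by omega), if_neg h2]
        exact tr.alt i (by omega)

lemma extendTrail_alt {F : Finset (MEdge V)} (tr : Trail F) (x : MEdge V) (w : V)
    (hx : x ∈ F) (hni : x ∉ tr.T)
    (hlab : x.lab = !((tr.e (tr.k - 1)).lab)) (hends : x.ends = s(tr.v tr.k, w)) :
    True := trivial

lemma exists_closed_aux {F : Finset (MEdge V)} (hbal : ∀ w, bsum F w = 0)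
    (hnd : ∀ x ∈ F, ¬ x.ends.IsDiag) :
    ∀ (d : ℕ) (tr : Trail F), F.card - tr.k ≤ d → ∃ tr' : Trail F, tr'.Closed := by
  intro d
  induction d with
  | zero =>
    intro tr h
    rcases extend_or_close hbal hnd tr with hc | ⟨x, hxF, hxT, hlab, hmem⟩
    · exact ⟨tr, hc⟩
    · obtain ⟨w, hw⟩ := Sym2.mem_iff_exists.mp hmem
      have hle := (extendTrail tr x w hxF hxT hlab hw).k_le
      have hk : (extendTrail tr x w hxF hxT hlab hw).k = tr.k + 1 := rfl
      omega
  | succ d ih =>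
    intro tr h
    rcases extend_or_close hbal hnd tr with hc | ⟨x, hxF, hxT, hlab, hmem⟩
    · exact ⟨tr, hc⟩
    · obtain ⟨w, hw⟩ := Sym2.mem_iff_exists.mp hmem
      refine ih (extendTrail tr x w hxF hxT hlab hw) ?_
      have hk : (extendTrail tr x w hxF hxT hlab hw).k = tr.k + 1 := rfl
      omega

def closedToCycle {E F : Finset (MEdge V)} (hFE : F ⊆ E) (tr : Trail F) (hc : tr.Closed)
    (h2 : 2 ≤ tr.k) : AltCycle E where
  n := tr.k
  two_le := h2
  edge i := tr.e (i % tr.k)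
  vert i := tr.v (i % tr.k)
  edge_periodic i := by rw [Nat.add_mod_right]
  vert_periodic i := by rw [Nat.add_mod_right]
  mem i := hFE (tr.mem _ (Nat.mod_lt _ tr.kpos))
  inj i hi j hj h := by
    rw [Nat.mod_eq_of_lt hi, Nat.mod_eq_of_lt hj] at h
    exact tr.inj i hi j hj h
  ends_eq i := by
    have hj : i % tr.k < tr.k := Nat.mod_lt _ tr.kpos
    have hone : 1 % tr.k = 1 := Nat.mod_eq_of_lt (by omega)
    by_cases h : i % tr.k + 1 = tr.k
    · have h1 : (i + 1) % tr.k = 0 := by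
        rw [Nat.add_mod, hone, h, Nat.mod_self]
      rw [h1, tr.ends _ hj, h, hc.1]
    · have h1 : (i + 1) % tr.k = i % tr.k + 1 := by
        rw [Nat.add_mod, hone]
        exact Nat.mod_eq_of_lt (by omega)
      rw [h1]
      exact tr.ends _ hj
  alt i := by
    have hj : i % tr.k < tr.k := Nat.mod_lt _ tr.kpos
    have hone : 1 % tr.k = 1 := Nat.mod_eq_of_lt (by omega)
    by_cases h : i % tr.k + 1 = tr.k
    · have h1 : (i + 1) % tr.k = 0 := by
        rw [Nat.add_mod, hone, h, Nat.mod_self]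
      rw [h1]
      have : i % tr.k = tr.k - 1 := by omega
      rw [this, ← Bool.not_not ((tr.e (tr.k - 1)).lab), ← hc.2]
    · have h1 : (i + 1) % tr.k = i % tr.k + 1 := by
        rw [Nat.add_mod, hone]
        exact Nat.mod_eq_of_lt (by omega)
      rw [h1]
      exact tr.alt _ (by omega)

lemma closedToCycle_edges {E F : Finset (MEdge V)} (hFE : F ⊆ E) (tr : Trail F)
    (hc : tr.Closed) (h2 : 2 ≤ tr.k) :
    (closedToCycle hFE tr hc h2).edges ⊆ F := by
  intro x hx
  obtain ⟨i, hi, rfl⟩ := Finset.mem_image.mp hx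
  exact tr.mem _ (Nat.mod_lt _ tr.kpos)

lemma exists_altCycle {E F : Finset (MEdge V)} (hFE : F ⊆ E) (hne : F.Nonempty)
    (hbal : ∀ w, bsum F w = 0) (hnd : ∀ x ∈ F, ¬ x.ends.IsDiag) :
    ∃ C : AltCycle E, C.edges ⊆ F := by
  obtain ⟨x, hx⟩ := hne
  obtain ⟨a, b, hab⟩ : ∃ a b, x.ends = s(a, b) := by
    induction x.ends using Sym2.ind with | _ a b => exact ⟨a, b, rfl⟩
  have tr0 : Trail F :=
    { k := 1
      kpos := one_pos
      e := fun _ => x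
      v := fun i => if i = 0 then a else b
      mem := fun i _ => hx
      inj := fun i hi j hj _ => by omega
      ends := by
        intro i hi
        have h0 : i = 0 := by omega
        subst h0
        show x.ends = s(if (0:ℕ) = 0 then a else b, if (0:ℕ) + 1 = 0 then a else b)
        rw [if_pos rfl, if_neg (by omega)]
        exact hab
      alt := fun i hi => by omega }
  obtain ⟨tr, hc⟩ := exists_closed_aux hbal hnd F.card tr0 (by omega)
  have h2 : 2 ≤ tr.k := by
    rcases Nat.lt_or_ge tr.k 2 with h | h
    · exfalso
      have h1 : tr.k = 1 := by have := tr.kpos; omega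
      have := hc.2
      rw [h1] at this
      simp at this
    · exact h
  exact ⟨closedToCycle hFE tr hc h2, closedToCycle_edges hFE tr hc h2⟩

lemma cycle_card {E : Finset (MEdge V)} (C : AltCycle E) : C.edges.card = C.n := by
  rw [AltCycle.edges, Finset.card_image_of_injOn, Finset.card_range]
  intro i hi j hj h
  exact C.inj i (by simpa using hi) j (by simpa using hj) h

lemma cycle_nonempty {E : Finset (MEdge V)} (C : AltCycle E) : C.edges.Nonempty := by
  refine ⟨C.edge 0, Finset.mem_image.mpr ⟨0, Finset.mem_range.mpr ?_, rfl⟩⟩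
  have := C.two_le; omega

lemma cycle_edges_subset {E : Finset (MEdge V)} (C : AltCycle E) : C.edges ⊆ E := by
  intro x hx
  obtain ⟨i, _, rfl⟩ := Finset.mem_image.mp hx
  exact C.mem i

lemma exists_minimal_aux {E : Finset (MEdge V)} :
    ∀ (m : ℕ) (C : AltCycle E), C.edges.card ≤ m →
      ∃ C' : AltCycle E, C'.Minimal ∧ C'.edges ⊆ C.edges := by
  intro m
  induction m with
  | zero =>
    intro C h
    exact absurd (Finset.card_eq_zero.mp (by omega)) (cycle_nonempty C).ne_empty
  | succ m ih =>
    intro C h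
    by_cases hmin : C.Minimal
    · exact ⟨C, hmin, Finset.Subset.rfl⟩
    · rw [AltCycle.Minimal] at hmin
      push_neg at hmin
      obtain ⟨C2, hsub, hne⟩ := hmin
      have hss : C2.edges ⊂ C.edges := Finset.ssubset_iff_subset_ne.mpr ⟨hsub, hne⟩
      obtain ⟨C', hmin', hsub'⟩ := ih C2 (by have := Finset.card_lt_card hss; omega)
      exact ⟨C', hmin', hsub'.trans hsub⟩

lemma exists_minimal {E : Finset (MEdge V)} (C : AltCycle E) :
    ∃ C' : AltCycle E, C'.Minimal ∧ C'.edges ⊆ C.edges :=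
  exists_minimal_aux C.edges.card C le_rfl

lemma injf (l : Bool) : Function.Injective (fun h : Hyperarc V => (⟨l, h.1, h.2⟩ : MEdge V)) := by
  rintro ⟨a1, a2⟩ ⟨b1, b2⟩ h
  simpa [MEdge.mk.injEq, Prod.ext_iff] using h

lemma mem_mEdges {A0 A1 : Finset (Hyperarc V)} {x : MEdge V} :
    x ∈ mEdges A0 A1 ↔
      (x.lab = true ∧ (x.tail, x.ends) ∈ A0 \ A1) ∨
      (x.lab = false ∧ (x.tail, x.ends) ∈ A1 \ A0) := by
  obtain ⟨l, t, z⟩ := x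
  simp only [mEdges, Finset.mem_union, Finset.mem_image, MEdge.mk.injEq]
  constructor
  · rintro (⟨⟨t', z'⟩, hm, hl, ht, hz⟩ | ⟨⟨t', z'⟩, hm, hl, ht, hz⟩)
    · exact Or.inl ⟨hl.symm, by simpa [← ht, ← hz] using hm⟩
    · exact Or.inr ⟨hl.symm, by simpa [← ht, ← hz] using hm⟩
  · rintro (⟨hl, hm⟩ | ⟨hl, hm⟩)
    · exact Or.inl ⟨(t, z), hm, hl.symm, rfl, rfl⟩
    · exact Or.inr ⟨(t, z), hm, hl.symm, rfl, rfl⟩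

lemma card_filter_mEdges_true (A0 A1 : Finset (Hyperarc V)) (q : Hyperarc V → Prop)
    [DecidablePred q] :
    ((mEdges A0 A1).filter fun x => x.lab = true ∧ q (x.tail, x.ends)).card
      = ((A0 \ A1).filter q).card := by
  have hset : ((mEdges A0 A1).filter fun x => x.lab = true ∧ q (x.tail, x.ends))
      = ((A0 \ A1).filter q).image (fun h => ⟨true, h.1, h.2⟩) := by
    ext ⟨l, t, z⟩
    simp only [Finset.mem_filter, Finset.mem_image, mem_mEdges]
    constructor
    · rintro ⟨(⟨hl, hm⟩ | ⟨hl, hm⟩), hl', hq⟩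
      · exact ⟨(t, z), ⟨hm, hq⟩, by rw [← hl']⟩
      · rw [hl] at hl'; cases hl'
    · rintro ⟨⟨t', z'⟩, ⟨hm, hq⟩, heq⟩
      obtain ⟨hl, ht, hz⟩ := MEdge.mk.injEq .. ▸ heq
      subst ht; subst hz
      exact ⟨Or.inl ⟨hl.symm ▸ rfl, hm⟩, hl.symm ▸ rfl, hq⟩
  rw [hset, Finset.card_image_of_injective _ (injf true)]

lemma card_filter_mEdges_false (A0 A1 : Finset (Hyperarc V)) (q : Hyperarc V → Prop)
    [DecidablePred q] :
    ((mEdges A0 A1).filter fun x => x.lab = false ∧ q (x.tail, x.ends)).card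
      = ((A1 \ A0).filter q).card := by
  have hset : ((mEdges A0 A1).filter fun x => x.lab = false ∧ q (x.tail, x.ends))
      = ((A1 \ A0).filter q).image (fun h => ⟨false, h.1, h.2⟩) := by
    ext ⟨l, t, z⟩
    simp only [Finset.mem_filter, Finset.mem_image, mem_mEdges]
    constructor
    · rintro ⟨(⟨hl, hm⟩ | ⟨hl, hm⟩), hl', hq⟩
      · rw [hl] at hl'; cases hl'
      · exact ⟨(t, z), ⟨hm, hq⟩, by rw [← hl']⟩
    · rintro ⟨⟨t', z'⟩, ⟨hm, hq⟩, heq⟩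
      obtain ⟨hl, ht, hz⟩ := MEdge.mk.injEq .. ▸ heq
      subst ht; subst hz
      exact ⟨Or.inr ⟨hl.symm ▸ rfl, hm⟩, hl.symm ▸ rfl, hq⟩
  rw [hset, Finset.card_image_of_injective _ (injf false)]

lemma sdiff_filter_card {A0 A1 : Finset (Hyperarc V)} (q : Hyperarc V → Prop) [DecidablePred q]
    (h : (A0.filter q).card = (A1.filter q).card) :
    ((A0 \ A1).filter q).card = ((A1 \ A0).filter q).card := by
  have e0 : (A0 \ A1).filter q = A0.filter q \ A1.filter q := by
    ext x; simp only [Finset.mem_filter, Finset.mem_sdiff]; tauto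
  have e1 : (A1 \ A0).filter q = A1.filter q \ A0.filter q := by
    ext x; simp only [Finset.mem_filter, Finset.mem_sdiff]; tauto
  have c0 := Finset.card_sdiff_add_card_inter (A0.filter q) (A1.filter q)
  have c1 := Finset.card_sdiff_add_card_inter (A1.filter q) (A0.filter q)
  rw [Finset.inter_comm] at c1
  rw [e0, e1]; omega

lemma cycle_labs {E : Finset (MEdge V)} (C : AltCycle E) (i : ℕ) :
    (C.edge i).lab = if i % 2 = 0 then (C.edge 0).lab else !(C.edge 0).lab := by
  induction i with
  | zero => simp
  | succ n ih =>
    have halt := C.alt n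
    have : (C.edge (n + 1)).lab = !(C.edge n).lab := by
      rw [halt, Bool.not_not]
    rw [this, ih]
    rcases Nat.mod_two_eq_zero_or_one n with h | h
    · rw [if_pos h, if_neg (by omega)]
    · rw [if_neg (by omega), if_pos (by omega), Bool.not_not]

lemma cycle_even {E : Finset (MEdge V)} (C : AltCycle E) : C.n % 2 = 0 := by
  have h := cycle_labs C C.n
  have hper := C.edge_periodic 0
  rw [zero_add] at hper
  rw [hper] at h
  by_contra hodd
  rw [if_neg hodd] at h
  cases hl : (C.edge 0).lab <;> rw [hl] at h <;> cases h

end MinAux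

/-- If `M(H0 Δ H*)` contains exactly one minimal alternating cycle `C*`, then
`|C*| ≥ 4`; in particular `C*` is not an alternating 2-cycle made of two
parallel edges `{a,b}_{H0,t}` and `{a,b}_{H*,s}` with `t ≠ s`. -/
theorem min_cycle_length_ge_four {V : Type*} [DecidableEq V]
    (D : DegreeSeq V) (A0 A1 : Finset (Hyperarc V))
    (h0 : Realizes A0 D) (h1 : Realizes A1 D)
    (C : AltCycle (mEdges A0 A1)) (hmin : C.Minimal)
    (huniq : ∀ C' : AltCycle (mEdges A0 A1), C'.Minimal → C'.edges = C.edges) :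
    4 ≤ C.n ∧
      ∀ (a b : V) (t s : Tail), t ≠ s →
        C.edges ≠ {⟨true, t, s(a, b)⟩, ⟨false, s, s(a, b)⟩} := by
  -- non-degeneracy of all edges of M
  have hndM : ∀ x ∈ mEdges A0 A1, ¬ x.ends.IsDiag := by
    intro x hx
    rcases MinAux.mem_mEdges.mp hx with ⟨_, hm⟩ | ⟨_, hm⟩
    · exact h0.1 _ (Finset.mem_sdiff.mp hm).1
    · exact h1.1 _ (Finset.mem_sdiff.mp hm).1
  -- vertex balance of M
  have hbalM : ∀ w, MinAux.bsum (mEdges A0 A1) w = 0 := by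
    intro w
    rw [MinAux.bsum_eq_cards]
    have hc0 := MinAux.card_filter_mEdges_true A0 A1 (fun h => w ∈ h.2)
    have hc1 := MinAux.card_filter_mEdges_false A0 A1 (fun h => w ∈ h.2)
    have hsd := MinAux.sdiff_filter_card (A0 := A0) (A1 := A1) (fun h => w ∈ h.2)
      ((h0.2.1 w).trans (h1.2.1 w).symm)
    rw [hc0, hc1, hsd]
    ring
  -- tail balance of M
  have htail : ∀ t : Tail,
      ((mEdges A0 A1).filter fun x => x.lab = true ∧ x.tail = t).card
        = ((mEdges A0 A1).filter fun x => x.lab = false ∧ x.tail = t).card := by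
    intro t
    have hc0 := MinAux.card_filter_mEdges_true A0 A1 (fun h => h.1 = t)
    have hc1 := MinAux.card_filter_mEdges_false A0 A1 (fun h => h.1 = t)
    have hsd := MinAux.sdiff_filter_card (A0 := A0) (A1 := A1) (fun h => h.1 = t)
      ((h0.2.2 t).trans (h1.2.2 t).symm)
    rw [hc0, hc1, hsd]
  -- key step: the length cannot be 2
  have key : C.n ≠ 2 := by
    intro h2n
    have hne01 : C.edge 0 ≠ C.edge 1 := by
      intro h
      have := C.inj 0 (by omega) 1 (by omega) h
      omega
    have hv2 : C.vert 2 = C.vert 0 := by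
      have := C.vert_periodic 0
      rwa [zero_add, h2n] at this
    have hends : (C.edge 1).ends = (C.edge 0).ends := by
      rw [C.ends_eq 0, C.ends_eq 1]
      rw [show (1:ℕ) + 1 = 2 from rfl, hv2]
      exact Sym2.eq_swap
    have hlab01 : (C.edge 0).lab = !(C.edge 1).lab := C.alt 0
    have hm0 : C.edge 0 ∈ mEdges A0 A1 := C.mem 0
    have hm1 : C.edge 1 ∈ mEdges A0 A1 := C.mem 1
    have hedges : C.edges = {C.edge 0, C.edge 1} := by
      ext y
      simp only [AltCycle.edges, h2n, Finset.mem_image, Finset.mem_range, Finset.mem_insert,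
        Finset.mem_singleton]
      constructor
      · rintro ⟨i, hi, rfl⟩
        interval_cases i
        · exact Or.inl rfl
        · exact Or.inr rfl
      · rintro (rfl | rfl)
        · exact ⟨0, by omega, rfl⟩
        · exact ⟨1, by omega, rfl⟩
    have htne : (C.edge 0).tail ≠ (C.edge 1).tail := by
      intro hteq
      have harc : ((C.edge 0).tail, (C.edge 0).ends) = ((C.edge 1).tail, (C.edge 1).ends) := by
        rw [hteq, hends]
      rcases MinAux.mem_mEdges.mp hm0 with ⟨hl0, hmem0⟩ | ⟨hl0, hmem0⟩ <;>
        rcases MinAux.mem_mEdges.mp hm1 with ⟨hl1, hmem1⟩ | ⟨hl1, hmem1⟩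
      · rw [hl0, hl1] at hlab01; cases hlab01
      · exact (Finset.mem_sdiff.mp hmem0).2 (harc ▸ (Finset.mem_sdiff.mp hmem1).1)
      · exact (Finset.mem_sdiff.mp hmem1).2 (harc.symm ▸ (Finset.mem_sdiff.mp hmem0).1)
      · rw [hl0, hl1] at hlab01; cases hlab01
    -- generic contradiction
    have main : ∀ X Y : MEdge V, X ∈ mEdges A0 A1 → Y ∈ mEdges A0 A1 → X.lab = true → Y.lab = false →
        X.tail ≠ Y.tail → X.ends = Y.ends → C.edges = {X, Y} → False := by
      intro X Y hX hY hXl hYl hT hXYe hCE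
      have hXY : X ≠ Y := by
        intro h; rw [h, hYl] at hXl; cases hXl
      have hpos : 0 < ((mEdges A0 A1).filter fun x => x.lab = true ∧ x.tail = X.tail).card :=
        Finset.card_pos.mpr ⟨X, Finset.mem_filter.mpr ⟨hX, hXl, rfl⟩⟩
      have hfne : ((mEdges A0 A1).filter fun x => x.lab = false ∧ x.tail = X.tail).Nonempty :=
        Finset.card_pos.mp (by rw [← htail X.tail]; exact hpos)
      obtain ⟨y, hy⟩ := hfne
      obtain ⟨hyM, hyl, hyt⟩ := Finset.mem_filter.mp hy
      have hyC : y ∉ C.edges := by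
        rw [hCE]
        simp only [Finset.mem_insert, Finset.mem_singleton]
        rintro (rfl | rfl)
        · rw [hXl] at hyl; cases hyl
        · exact hT hyt.symm
      have hFs : mEdges A0 A1 \ C.edges ⊆ mEdges A0 A1 := Finset.sdiff_subset
      have hFne : (mEdges A0 A1 \ C.edges).Nonempty := ⟨y, Finset.mem_sdiff.mpr ⟨hyM, hyC⟩⟩
      have hFbal : ∀ w, MinAux.bsum (mEdges A0 A1 \ C.edges) w = 0 := by
        intro w
        unfold MinAux.bsum
        rw [Finset.sum_sdiff_eq_sub (MinAux.cycle_edges_subset C)]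
        have hb := hbalM w
        unfold MinAux.bsum at hb
        rw [hb, hCE, Finset.sum_pair hXY]
        by_cases hw : w ∈ X.ends
        · rw [if_pos hw, if_pos (hXYe ▸ hw), MinAux.sgn, MinAux.sgn, hXl, hYl]
          simp
        · rw [if_neg hw, if_neg (fun hc => hw (hXYe ▸ hc))]
          simp
      have hFnd : ∀ x ∈ mEdges A0 A1 \ C.edges, ¬ x.ends.IsDiag :=
        fun x hx => hndM x (Finset.mem_sdiff.mp hx).1
      obtain ⟨C1, hC1⟩ := MinAux.exists_altCycle hFs hFne hFbal hFnd
      obtain ⟨C2, hC2min, hC2sub⟩ := MinAux.exists_minimal C1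
      obtain ⟨z, hz⟩ := MinAux.cycle_nonempty C2
      have hzF : z ∈ mEdges A0 A1 \ C.edges := (hC2sub.trans hC1) hz
      have hzC : z ∈ C.edges := by rw [← huniq C2 hC2min]; exact hz
      exact (Finset.mem_sdiff.mp hzF).2 hzC
    cases hE0l : (C.edge 0).lab
    · have hE1l : (C.edge 1).lab = true := by
        rw [hE0l] at hlab01
        cases h1l : (C.edge 1).lab
        · rw [h1l] at hlab01; cases hlab01
        · rfl
      exact main (C.edge 1) (C.edge 0) hm1 hm0 hE1l hE0l (Ne.symm htne) hends
        (hedges.trans (Finset.pair_comm _ _))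
    · have hE1l : (C.edge 1).lab = false := by
        rw [hE0l] at hlab01
        cases h1l : (C.edge 1).lab
        · rfl
        · rw [h1l] at hlab01; cases hlab01
      exact main (C.edge 0) (C.edge 1) hm0 hm1 hE0l hE1l htne hends.symm hedges
  constructor
  · have heven := MinAux.cycle_even C
    have h2 := C.two_le
    omega
  · intro a b t s hts hEq
    have hcard : C.edges.card = 2 := by
      rw [hEq]
      rw [Finset.card_insert_of_notMem (by simp), Finset.card_singleton]
    have := MinAux.cycle_card C
    exact key (by omega)
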